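/- Let x ∈ A_i with i > 0. If v_{ρ,σ}(x) ≥ ρ + σ for some pair of relatively prime positive integers (ρ,σ), then x is unsolvable. (Lemma 3.5) -/

import Mathlib

open scoped BigOperators

/-- Defining relation of the Weyl algebra: `p * q = q * p + 1`. -/
inductive WeylRel (F : Type*) [CommRing F] :
    FreeAlgebra F (Fin 2) → FreeAlgebra F (Fin 2) → Prop
  | comm : WeylRel F (FreeAlgebra.ι F 0 * FreeAlgebra.ι F 1)
      (FreeAlgebra.ι F 1 * FreeAlgebra.ι F 0 + 1)

/-- The Weyl algebra over `F`. -/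
abbrev WeylAlgebra (F : Type*) [CommRing F] := RingQuot (WeylRel F)

variable (F : Type*) [Field F] [CharZero F]

/-- The generator `p` of the Weyl algebra. -/
noncomputable def Wp : WeylAlgebra F :=
  RingQuot.mkAlgHom F (WeylRel F) (FreeAlgebra.ι F 0)

/-- The generator `q` of the Weyl algebra. -/
noncomputable def Wq : WeylAlgebra F :=
  RingQuot.mkAlgHom F (WeylRel F) (FreeAlgebra.ι F 1)

/-- `x` is solvable if `[x, y] = 1` for some `y`. -/
def Solvable (x : WeylAlgebra F) : Prop := ∃ y : WeylAlgebra F, x * y - y * x = 1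

/-- The centralizer `C(x)`. -/
def Cset (x : WeylAlgebra F) : Set (WeylAlgebra F) := {y | x * y - y * x = 0}

/-- `N(x) = {y | (ad x)^n y = 0 for some n ≥ 1}`. -/
def Nset (x : WeylAlgebra F) : Set (WeylAlgebra F) :=
  {y | ∃ n : ℕ, 1 ≤ n ∧ (fun z => x * z - z * x)^[n] y = 0}

/-- `D(x) = {y | [x,y] = λ y for some scalar λ}`. -/
def Dset (x : WeylAlgebra F) : Set (WeylAlgebra F) :=
  {y | ∃ c : F, x * y - y * x = c • y}

def Delta1 : Set (WeylAlgebra F) :=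
  {x | x ∉ Set.range (algebraMap F (WeylAlgebra F)) ∧
    Nset F x = Set.univ ∧ Dset F x = Cset F x}

def Delta2 : Set (WeylAlgebra F) :=
  {x | x ∉ Set.range (algebraMap F (WeylAlgebra F)) ∧
    Nset F x ≠ Set.univ ∧ Nset F x ≠ Cset F x ∧ Dset F x = Cset F x}

/-- The graded component `A_s = {a | [pq, a] = s • a}`. -/
def Wgrade (s : ℤ) : Set (WeylAlgebra F) :=
  {a | (Wp F * Wq F) * a - a * (Wp F * Wq F) = s • a}

/-- The monomial `p^i q^j`. -/
noncomputable def Wmono (i j : ℕ) : WeylAlgebra F := Wp F ^ i * Wq F ^ j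

/-- `α` is the coordinate family of `x` in the basis `p^i q^j`. -/
def Represents (α : (ℕ × ℕ) →₀ F) (x : WeylAlgebra F) : Prop :=
  x = α.sum fun ij c => c • Wmono F ij.1 ij.2

/-- `v_{ρ,σ}(x) = max { iρ + jσ | (i,j) ∈ E(x) }`. -/
def vdeg (α : (ℕ × ℕ) →₀ F) (ρ σ : ℕ) : ℕ :=
  α.support.sup fun ij => ij.1 * ρ + ij.2 * σ

/-- `E_{ρ,σ}(x)`. -/
def Eset (α : (ℕ × ℕ) →₀ F) (ρ σ : ℕ) : Finset (ℕ × ℕ) :=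
  α.support.filter fun ij => ij.1 * ρ + ij.2 * σ = vdeg F α ρ σ

/-- The `(ρ,σ)`-polynomial of `x`, an element of `F[X,Y]`. -/
noncomputable def wpoly (α : (ℕ × ℕ) →₀ F) (ρ σ : ℕ) : MvPolynomial (Fin 2) F :=
  ∑ ij ∈ Eset F α ρ σ,
    MvPolynomial.monomial (Finsupp.single 0 ij.1 + Finsupp.single 1 ij.2) (α ij)

/-- The `(ρ,σ)`-term of `x`, an element of the Weyl algebra. -/
noncomputable def wterm (α : (ℕ × ℕ) →₀ F) (ρ σ : ℕ) : WeylAlgebra F :=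
  ∑ ij ∈ Eset F α ρ σ, α ij • Wmono F ij.1 ij.2
namespace WeylAux
open Polynomial
set_option linter.unusedSectionVars false

variable (F : Type*) [Field F] [CharZero F]

noncomputable def Dop : Module.End F (Polynomial F) := Polynomial.derivative

noncomputable def Mop : Module.End F (Polynomial F) := LinearMap.mulLeft F (X : Polynomial F)

lemma DM_rel : Dop F * Mop F = Mop F * Dop F + 1 := by
  apply LinearMap.ext
  intro f
  simp [Dop, Mop, Module.End.mul_apply, derivative_mul, add_comm]

noncomputable def Phi : WeylAlgebra F →ₐ[F] Module.End F (Polynomial F) :=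
  RingQuot.liftAlgHom F ⟨FreeAlgebra.lift F ![Dop F, Mop F], by
    rintro _ _ ⟨⟩
    simp only [map_mul, map_add, map_one, FreeAlgebra.lift_ι_apply]
    simpa using DM_rel F⟩

lemma Phi_p : Phi F (Wp F) = Dop F := by
  rw [Wp, Phi, RingQuot.liftAlgHom_mkAlgHom_apply, FreeAlgebra.lift_ι_apply]
  simp

lemma Phi_q : Phi F (Wq F) = Mop F := by
  rw [Wq, Phi, RingQuot.liftAlgHom_mkAlgHom_apply, FreeAlgebra.lift_ι_apply]
  simp

lemma Mop_pow_apply (l : ℕ) (f : Polynomial F) : ((Mop F)^l) f = X^l * f := by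
  induction l generalizing f with
  | zero => simp
  | succ l ih =>
    rw [pow_succ, Module.End.mul_apply, show (Mop F) f = X * f from rfl, ih,
      ← mul_assoc, ← pow_succ]

lemma Dop_pow_apply (k m : ℕ) : ((Dop F)^k) ((X : Polynomial F)^m) =
    (m.descFactorial k : F) • X^(m-k) := by
  induction k with
  | zero => simp
  | succ k ih =>
    rw [pow_succ', Module.End.mul_apply, ih, map_smul]
    show (↑(m.descFactorial k) : F) • derivative (X ^ (m - k)) = _
    rw [derivative_X_pow, ← smul_eq_C_mul, smul_smul, Nat.descFactorial_succ,
      Nat.cast_mul, ← Nat.sub_sub, mul_comm]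


lemma WA_one_ne_zero : (1 : WeylAlgebra F) ≠ 0 := by
  intro h
  have h2 := congrArg (Phi F) h
  rw [map_one, map_zero] at h2
  have h3 := congrFun (congrArg DFunLike.coe h2) (1 : Polynomial F)
  simp only [Module.End.one_apply, LinearMap.zero_apply] at h3
  exact one_ne_zero h3

lemma Phi_mono_apply (k l n : ℕ) : Phi F (Wmono F k l) ((X : Polynomial F)^n) =
    ((n+l).descFactorial k : F) • X^(n+l-k) := by
  rw [Wmono, map_mul, map_pow (Phi F) (Wp F) k, map_pow (Phi F) (Wq F) l, Phi_p, Phi_q, Module.End.mul_apply, Mop_pow_apply,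
    ← pow_add, show l + n = n + l from add_comm l n, Dop_pow_apply]

lemma monicFamily_indep {ι : Type*} (s : Finset ι) (M : ι → Polynomial F) (c : ι → F)
    (hM : ∀ a ∈ s, (M a).Monic)
    (hinj : ∀ a ∈ s, ∀ b ∈ s, (M a).natDegree = (M b).natDegree → a = b)
    (h : ∑ a ∈ s, c a • M a = 0) : ∀ a ∈ s, c a = 0 := by
  classical
  induction s using Finset.strongInduction with
  | _ s ih =>
  rcases s.eq_empty_or_nonempty with rfl | hne
  · simp
  obtain ⟨b, hb, hmax⟩ := s.exists_max_image (fun a => (M a).natDegree) hne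
  have hcb : c b = 0 := by
    have h2 := congrArg (fun p => Polynomial.coeff p ((M b).natDegree)) h
    simp only [Polynomial.finset_sum_coeff, Polynomial.coeff_smul, Polynomial.coeff_zero,
      smul_eq_mul] at h2
    rw [Finset.sum_eq_single b] at h2
    · rwa [(hM b hb).coeff_natDegree, mul_one] at h2
    · intro a ha hab
      have hlt : (M a).natDegree < (M b).natDegree :=
        lt_of_le_of_ne (hmax a ha) (fun e => hab (hinj a ha b hb e))
      rw [Polynomial.coeff_eq_zero_of_natDegree_lt hlt, mul_zero]
    · intro hbs; exact absurd hb hbs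
  intro a ha
  rcases eq_or_ne a b with rfl | hab
  · exact hcb
  have herase : ∑ a ∈ s.erase b, c a • M a = 0 := by
    rw [Finset.sum_erase s (by rw [hcb, zero_smul])]
    exact h
  exact ih (s.erase b) (Finset.erase_ssubset hb) (fun a ha => hM a (Finset.mem_of_mem_erase ha))
    (fun a ha b' hb' => hinj a (Finset.mem_of_mem_erase ha) b' (Finset.mem_of_mem_erase hb'))
    herase a (Finset.mem_erase_of_ne_of_mem hab ha)

/-- The auxiliary monic polynomial family for the independence proof. -/
noncomputable def Rpoly (kl : ℕ × ℕ) : Polynomial F :=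
  ∏ j ∈ Finset.range kl.1, (X + C ((kl.2 : F) - j))

lemma Rpoly_monic (kl : ℕ × ℕ) : (Rpoly F kl).Monic :=
  Polynomial.monic_prod_of_monic _ _ fun _ _ => Polynomial.monic_X_add_C _

lemma Rpoly_natDegree (kl : ℕ × ℕ) : (Rpoly F kl).natDegree = kl.1 := by
  rw [Rpoly, Polynomial.natDegree_prod _ _ (fun j _ => (Polynomial.monic_X_add_C _).ne_zero)]
  simp only [Polynomial.natDegree_X_add_C]
  rw [Finset.sum_const, Finset.card_range, smul_eq_mul, mul_one]

lemma Rpoly_eval (kl : ℕ × ℕ) (n : ℕ) (hkn : kl.1 ≤ n) :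
    (Rpoly F kl).eval (n : F) = ((n + kl.2).descFactorial kl.1 : F) := by
  rw [Rpoly, Polynomial.eval_prod, Nat.descFactorial_eq_prod_range, Nat.cast_prod]
  refine Finset.prod_congr rfl fun j hj => ?_
  have hj' : j < kl.1 := Finset.mem_range.mp hj
  have : j ≤ n + kl.2 := le_trans (le_of_lt (lt_of_lt_of_le hj' hkn)) (Nat.le_add_right _ _)
  rw [Nat.cast_sub this]
  simp only [Polynomial.eval_add, Polynomial.eval_X, Polynomial.eval_C]
  push_cast
  ring

lemma mono_indep : LinearIndependent F (fun kl : ℕ × ℕ => Wmono F kl.1 kl.2) := by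
  classical
  rw [linearIndependent_iff]
  intro γ hγ
  -- the key vanishing statement
  have h1 : ∑ kl ∈ γ.support, γ kl • (Phi F) (Wmono F kl.1 kl.2) = 0 := by
    simp only [Finsupp.linearCombination_apply, Finsupp.sum] at hγ
    have h1 := congrArg (Phi F) hγ
    rw [map_sum, map_zero] at h1
    simpa only [map_smul] using h1
  set K := γ.support.sup (fun kl => kl.1) with hK
  have h0 : ∀ n, K ≤ n → ∀ m : ℕ,
      ∑ kl ∈ γ.support.filter (fun kl => n + kl.2 - kl.1 = m),
        γ kl * ((n + kl.2).descFactorial kl.1 : F) = 0 := by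
    intro n hn m
    have h2 := congrFun (congrArg DFunLike.coe h1) ((X : Polynomial F) ^ n)
    simp only [LinearMap.coe_sum, Finset.sum_apply, LinearMap.smul_apply,
      LinearMap.zero_apply, Phi_mono_apply] at h2
    have h3 := congrArg (fun p => Polynomial.coeff p m) h2
    simp only [Polynomial.finset_sum_coeff, Polynomial.coeff_smul, Polynomial.coeff_zero,
      smul_eq_mul, Polynomial.coeff_smul, Polynomial.coeff_X_pow] at h3
    rw [← h3, Finset.sum_filter]
    refine Finset.sum_congr rfl fun kl hkl => ?_
    by_cases he : n + kl.2 - kl.1 = m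
    · rw [if_pos he, if_pos he.symm, mul_one]
    · rw [if_neg he, if_neg (fun h => he h.symm), mul_zero, mul_zero]
  -- now fix an element of the support and show its coefficient vanishes
  ext kl₀
  rw [Finsupp.coe_zero, Pi.zero_apply]
  by_contra hne
  have hkl₀ : kl₀ ∈ γ.support := Finsupp.mem_support_iff.mpr hne
  set d : ℤ := (kl₀.2 : ℤ) - kl₀.1 with hd
  set sdiag := γ.support.filter (fun kl => (kl.2 : ℤ) - kl.1 = d) with hsdiag
  set P : Polynomial F := ∑ kl ∈ sdiag, γ kl • Rpoly F kl with hP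
  have hsupK : ∀ kl ∈ γ.support, kl.1 ≤ K := fun kl hkl => Finset.le_sup hkl
  have hPeval : ∀ n : ℕ, K ≤ n → P.eval ((n : F)) = 0 := by
    intro n hn
    have hm := h0 n hn (n + kl₀.2 - kl₀.1)
    rw [hP, Polynomial.eval_finset_sum]
    have : ∀ kl ∈ sdiag, Polynomial.eval (n:F) (γ kl • Rpoly F kl)
        = γ kl * ((n + kl.2).descFactorial kl.1 : F) := by
      intro kl hkl
      have hkl' : kl ∈ γ.support := Finset.mem_of_mem_filter kl hkl
      rw [Polynomial.eval_smul, smul_eq_mul, Rpoly_eval F kl n (le_trans (hsupK kl hkl') hn)]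
    rw [Finset.sum_congr rfl this, ← hm]
    apply Finset.sum_congr _ (fun _ _ => rfl)
    -- the two filters agree
    apply Finset.filter_congr
    intro kl hkl
    have h4 : kl.1 ≤ n := le_trans (hsupK kl hkl) hn
    have h5 : kl₀.1 ≤ n := le_trans (hsupK kl₀ hkl₀) hn
    simp only [hd, eq_iff_iff]
    constructor
    · intro h6; omega
    · intro h6; omega
  have hP0 : P = 0 := by
    apply Polynomial.eq_zero_of_infinite_isRoot
    refine Set.infinite_of_injective_forall_mem
      (f := fun j : ℕ => ((K + j : ℕ) : F)) ?_ ?_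
    · intro a b hab
      have := Nat.cast_injective (R := F) hab
      omega
    · intro j
      exact hPeval (K + j) (Nat.le_add_right _ _)
  have hvan := monicFamily_indep F sdiag (Rpoly F) γ
    (fun a _ => Rpoly_monic F a)
    (fun a ha b hb he => by
      rw [Rpoly_natDegree, Rpoly_natDegree] at he
      have ha' := (Finset.mem_filter.mp ha).2
      have hb' := (Finset.mem_filter.mp hb).2
      have : a.2 = b.2 := by omega
      exact Prod.ext he this)
    hP0
  have : kl₀ ∈ sdiag := Finset.mem_filter.mpr ⟨hkl₀, rfl⟩
  exact hne (hvan kl₀ this)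

/-- The span of the monomials. -/
noncomputable def Wspan : Submodule F (WeylAlgebra F) :=
  Submodule.span F (Set.range (fun kl : ℕ × ℕ => Wmono F kl.1 kl.2))

lemma mono_mem_span (k l : ℕ) : Wmono F k l ∈ Wspan F :=
  Submodule.subset_span ⟨(k, l), rfl⟩

lemma pq_rel : Wp F * Wq F = Wq F * Wp F + 1 := by
  have h := RingQuot.mkAlgHom_rel F (WeylRel.comm (F := F))
  simp only [map_mul, map_add, map_one] at h
  rw [Wp, Wq]
  exact h

lemma qp_rel : Wq F * Wp F = Wp F * Wq F - 1 := by
  rw [pq_rel, add_sub_cancel_right]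

lemma q_pow_p (k : ℕ) : Wq F * Wp F ^ (k+1) = Wp F ^ (k+1) * Wq F - (k+1) • Wp F ^ k := by
  induction k with
  | zero => simpa using qp_rel F
  | succ k ih =>
    rw [pow_succ, ← mul_assoc, ih, sub_mul, mul_assoc, qp_rel F, smul_mul_assoc, ← pow_succ]
    rw [mul_sub, mul_one]
    rw [← mul_assoc, succ_nsmul (Wp F ^ (k+1)) (k+1)]
    abel

lemma p_mul_mono (k l : ℕ) : Wp F * Wmono F k l = Wmono F (k+1) l := by
  rw [Wmono, Wmono, ← mul_assoc, ← pow_succ']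

lemma q_mul_mono (k l : ℕ) :
    Wq F * Wmono F k l ∈ Wspan F := by
  cases k with
  | zero =>
    have : Wq F * Wmono F 0 l = Wmono F 0 (l+1) := by
      rw [Wmono, Wmono, pow_zero, one_mul, one_mul, ← pow_succ']
    rw [this]; exact mono_mem_span F 0 (l+1)
  | succ k =>
    have : Wq F * Wmono F (k+1) l = Wmono F (k+1) (l+1) - (k+1) • Wmono F k l := by
      rw [Wmono, ← mul_assoc, q_pow_p, sub_mul, mul_assoc, Wmono, ← pow_succ',
        smul_mul_assoc, Wmono]
    rw [this]
    exact sub_mem (mono_mem_span F _ _) (Submodule.smul_mem _ _ (mono_mem_span F _ _))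

lemma left_mul_mem_span (u : WeylAlgebra F) (hu : ∀ k l, u * Wmono F k l ∈ Wspan F) :
    ∀ w ∈ Wspan F, u * w ∈ Wspan F := by
  intro w hw
  induction hw using Submodule.span_induction with
  | mem z hz => obtain ⟨kl, rfl⟩ := hz; exact hu kl.1 kl.2
  | zero => rw [mul_zero]; exact zero_mem _
  | add a b _ _ ha hb => rw [mul_add]; exact add_mem ha hb
  | smul c a _ ha => rw [mul_smul_comm]; exact Submodule.smul_mem _ _ ha

lemma mem_span (z : WeylAlgebra F) : z ∈ Wspan F := by
  obtain ⟨a, rfl⟩ := RingQuot.mkAlgHom_surjective F (WeylRel F) z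
  have hone : (1 : WeylAlgebra F) ∈ Wspan F := by
    have : (1 : WeylAlgebra F) = Wmono F 0 0 := by rw [Wmono]; simp
    rw [this]; exact mono_mem_span F 0 0
  suffices h : ∀ w ∈ Wspan F, RingQuot.mkAlgHom F (WeylRel F) a * w ∈ Wspan F by
    simpa using h 1 hone
  induction a using FreeAlgebra.induction with
  | grade0 r =>
    intro w hw
    rw [AlgHom.commutes, ← Algebra.smul_def]
    exact Submodule.smul_mem _ _ hw
  | grade1 i =>
    match i with
    | 0 =>
      intro w hw
      refine left_mul_mem_span F _ (fun k l => ?_) w hw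
      rw [show RingQuot.mkAlgHom F (WeylRel F) (FreeAlgebra.ι F 0) = Wp F from rfl, p_mul_mono]
      exact mono_mem_span F _ _
    | 1 =>
      intro w hw
      refine left_mul_mem_span F _ (fun k l => ?_) w hw
      rw [show RingQuot.mkAlgHom F (WeylRel F) (FreeAlgebra.ι F 1) = Wq F from rfl]
      exact q_mul_mono F k l
  | mul a b ha hb =>
    intro w hw
    rw [map_mul, mul_assoc]
    exact ha _ (hb _ hw)
  | add a b ha hb =>
    intro w hw
    rw [map_add, add_mul]
    exact add_mem (ha w hw) (hb w hw)

noncomputable def Wbasis : Module.Basis (ℕ × ℕ) F (WeylAlgebra F) :=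
  Module.Basis.mk (mono_indep F) (fun z _ => mem_span F z)

lemma represents_iff_lc (α : (ℕ × ℕ) →₀ F) (x : WeylAlgebra F) :
    Represents F α x ↔ Finsupp.linearCombination F (fun kl : ℕ × ℕ => Wmono F kl.1 kl.2) α = x := by
  rw [Represents, Finsupp.linearCombination_apply, eq_comm]

lemma represents_repr (x : WeylAlgebra F) : Represents F ((Wbasis F).repr x) x := by
  rw [represents_iff_lc]
  have h := (Wbasis F).linearCombination_repr x
  rwa [show ⇑(Wbasis F) = fun kl : ℕ × ℕ => Wmono F kl.1 kl.2 from Module.Basis.coe_mk _ _] at h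

lemma represents_unique {α β : (ℕ × ℕ) →₀ F} {x : WeylAlgebra F}
    (hα : Represents F α x) (hβ : Represents F β x) : α = β := by
  rw [represents_iff_lc] at hα hβ
  have h : Finsupp.linearCombination F (fun kl : ℕ × ℕ => Wmono F kl.1 kl.2) (α - β) = 0 := by
    rw [map_sub, hα, hβ, sub_self]
  have := linearIndependent_iff.mp (mono_indep F) _ h
  exact sub_eq_zero.mp this

lemma repr_of_represents {α : (ℕ × ℕ) →₀ F} {x : WeylAlgebra F} (h : Represents F α x) :
    (Wbasis F).repr x = α :=
  represents_unique F (represents_repr F x) h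

section Grading

/-- abbreviation for `h = pq`. -/
noncomputable def Wh : WeylAlgebra F := Wp F * Wq F

lemma h_p : Wh F * Wp F = Wp F * Wh F - Wp F := by
  rw [Wh, mul_assoc, qp_rel F, mul_sub, mul_one]

lemma h_q : Wh F * Wq F = Wq F * Wh F + Wq F := by
  rw [Wh]
  conv_rhs => rw [← mul_assoc, qp_rel F, sub_mul, one_mul]
  rw [mul_assoc]
  abel

lemma h_p_pow (k : ℕ) : Wh F * Wp F ^ k = Wp F ^ k * Wh F - k • Wp F ^ k := by
  induction k with
  | zero => simp
  | succ k ih =>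
    rw [pow_succ, ← mul_assoc, ih, sub_mul, mul_assoc, h_p, mul_sub, ← mul_assoc,
      smul_mul_assoc k (Wp F ^ k) (Wp F), succ_nsmul (Wp F ^ k * Wp F) k]
    abel

lemma h_q_pow (l : ℕ) : Wh F * Wq F ^ l = Wq F ^ l * Wh F + l • Wq F ^ l := by
  induction l with
  | zero => simp
  | succ l ih =>
    rw [pow_succ, ← mul_assoc, ih, add_mul, mul_assoc, h_q, mul_add, ← mul_assoc,
      smul_mul_assoc l (Wq F ^ l) (Wq F), succ_nsmul (Wq F ^ l * Wq F) l]
    abel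

lemma h_mono (k l : ℕ) : Wh F * Wmono F k l - Wmono F k l * Wh F
    = ((l : ℤ) - (k : ℤ)) • Wmono F k l := by
  have h1 : Wh F * Wmono F k l = Wmono F k l * Wh F + l • Wmono F k l - k • Wmono F k l := by
    rw [Wmono, ← mul_assoc, h_p_pow, sub_mul, mul_assoc, h_q_pow, mul_add, ← mul_assoc,
      smul_mul_assoc k (Wp F ^ k) (Wq F ^ l), mul_smul_comm l (Wp F ^ k) (Wq F ^ l)]
  rw [h1, sub_smul (l : ℤ) (k : ℤ) (Wmono F k l), natCast_zsmul, natCast_zsmul]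
  abel

lemma mono_mem_grade (k l : ℕ) : Wmono F k l ∈ Wgrade F ((l : ℤ) - (k : ℤ)) := by
  show (Wp F * Wq F) * _ - _ = _
  rw [← Wh]
  exact h_mono F k l

lemma grade_mul {s t : ℤ} {a b : WeylAlgebra F} (ha : a ∈ Wgrade F s) (hb : b ∈ Wgrade F t) :
    a * b ∈ Wgrade F (s + t) := by
  have ha' : Wh F * a - a * Wh F = s • a := ha
  have hb' : Wh F * b - b * Wh F = t • b := hb
  show (Wp F * Wq F) * (a * b) - (a * b) * (Wp F * Wq F) = (s + t) • (a * b)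
  rw [← Wh]
  have key : Wh F * (a * b) - (a * b) * Wh F
      = (Wh F * a - a * Wh F) * b + a * (Wh F * b - b * Wh F) := by
    rw [sub_mul, mul_sub, mul_assoc (Wh F) a b, mul_assoc a (Wh F) b, ← mul_assoc a b (Wh F)]
    abel
  rw [key, ha', hb', smul_mul_assoc s a b, mul_smul_comm t a b, add_smul s t (a * b)]

lemma grade_sub {s : ℤ} {a b : WeylAlgebra F} (ha : a ∈ Wgrade F s) (hb : b ∈ Wgrade F s) :
    a - b ∈ Wgrade F s := by
  have ha' : Wh F * a - a * Wh F = s • a := ha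
  have hb' : Wh F * b - b * Wh F = s • b := hb
  show (Wp F * Wq F) * (a - b) - (a - b) * (Wp F * Wq F) = s • (a - b)
  rw [← Wh, mul_sub, sub_mul, smul_sub s a b, ← ha', ← hb']
  abel

lemma grade_smul {s : ℤ} {c : F} {a : WeylAlgebra F} (ha : a ∈ Wgrade F s) :
    c • a ∈ Wgrade F s := by
  have ha' : Wh F * a - a * Wh F = s • a := ha
  show (Wp F * Wq F) * (c • a) - (c • a) * (Wp F * Wq F) = s • (c • a)
  rw [← Wh, mul_smul_comm, smul_mul_assoc, ← smul_sub c (Wh F * a) (a * Wh F), ha',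
    smul_comm c s a]

lemma grade_sum {s : ℤ} {ι : Type*} (t : Finset ι) (f : ι → WeylAlgebra F)
    (hf : ∀ a ∈ t, f a ∈ Wgrade F s) : ∑ a ∈ t, f a ∈ Wgrade F s := by
  classical
  induction t using Finset.induction_on with
  | empty =>
    show (Wp F * Wq F) * _ - _ = _
    simp
  | @insert a t' hnotmem ih =>
    rw [Finset.sum_insert hnotmem]
    have h1 : f a ∈ Wgrade F s := hf a (Finset.mem_insert_self a t')
    have h2 : ∑ x ∈ t', f x ∈ Wgrade F s := ih (fun b hb => hf b (Finset.mem_insert_of_mem hb))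
    have h1' : Wh F * f a - f a * Wh F = s • f a := h1
    have h2' : Wh F * (∑ x ∈ t', f x) - (∑ x ∈ t', f x) * Wh F = s • (∑ x ∈ t', f x) := h2
    show (Wp F * Wq F) * _ - _ = _
    rw [← Wh, mul_add, add_mul, show s • (f a + ∑ x ∈ t', f x) = s • f a + s • ∑ x ∈ t', f x from
      smul_add _ _ _, ← h1', ← h2']
    abel

lemma one_mem_grade : (1 : WeylAlgebra F) ∈ Wgrade F 0 := by
  show (Wp F * Wq F) * 1 - 1 * (Wp F * Wq F) = (0 : ℤ) • 1
  simp

lemma grade_support {s : ℤ} {x : WeylAlgebra F} (hx : x ∈ Wgrade F s)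
    {α : (ℕ × ℕ) →₀ F} (hrep : Represents F α x) :
    ∀ kl ∈ α.support, (kl.2 : ℤ) - (kl.1 : ℤ) = s := by
  intro kl₀ hkl₀
  have hx' : Wh F * x - x * Wh F = s • x := hx
  have hxs : x = ∑ kl ∈ α.support, α kl • Wmono F kl.1 kl.2 := hrep
  have key : ∑ kl ∈ α.support,
      ((((kl.2 : ℤ) - (kl.1 : ℤ) - s : ℤ) : F) * α kl) • Wmono F kl.1 kl.2 = 0 := by
    have expand : Wh F * x - x * Wh F - s • x
        = ∑ kl ∈ α.support,
          ((((kl.2 : ℤ) - (kl.1 : ℤ) - s : ℤ) : F) * α kl) • Wmono F kl.1 kl.2 := by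
      rw [hxs, Finset.mul_sum, Finset.sum_mul, show s • ∑ kl ∈ α.support, α kl • Wmono F kl.1 kl.2
        = ∑ kl ∈ α.support, s • (α kl • Wmono F kl.1 kl.2) from Finset.smul_sum, ← Finset.sum_sub_distrib,
        ← Finset.sum_sub_distrib]
      refine Finset.sum_congr rfl fun kl _ => ?_
      rw [mul_smul_comm, smul_mul_assoc,
        ← smul_sub (α kl) (Wh F * Wmono F kl.1 kl.2) (Wmono F kl.1 kl.2 * Wh F),
        h_mono F kl.1 kl.2, smul_comm (α kl) ((kl.2 : ℤ) - (kl.1 : ℤ)) (Wmono F kl.1 kl.2),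
        ← sub_smul ((kl.2 : ℤ) - (kl.1 : ℤ)) s (α kl • Wmono F kl.1 kl.2),
        ← Int.cast_smul_eq_zsmul F ((kl.2 : ℤ) - (kl.1 : ℤ) - s) (α kl • Wmono F kl.1 kl.2),
        smul_smul]
    rw [← expand, hx', sub_self]
  have hvan := linearIndependent_iff'.mp (mono_indep F) α.support
    (fun kl => (((kl.2 : ℤ) - (kl.1 : ℤ) - s : ℤ) : F) * α kl) key kl₀ hkl₀
  have hα : α kl₀ ≠ 0 := Finsupp.mem_support_iff.mp hkl₀
  have h2 : (((kl₀.2 : ℤ) - (kl₀.1 : ℤ) - s : ℤ) : F) = 0 := by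
    rcases mul_eq_zero.mp hvan with h | h
    · exact h
    · exact absurd h hα
  have h3 : ((kl₀.2 : ℤ) - (kl₀.1 : ℤ) - s : ℤ) = 0 := by exact_mod_cast h2
  omega

lemma graded_piece_eq_zero {T : Finset ℤ} {w : WeylAlgebra F} {g : ℤ → ℤ}
    {z : ℤ → WeylAlgebra F}
    (hz : ∀ s ∈ T, z s ∈ Wgrade F (g s))
    (hginj : ∀ a ∈ T, ∀ b ∈ T, g a = g b → a = b)
    (hsum : ∑ s ∈ T, z s = w) {c : ℤ} (hw : w ∈ Wgrade F c)
    {s₀ : ℤ} (hs₀ : s₀ ∈ T) (hne : g s₀ ≠ c) : z s₀ = 0 := by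
  classical
  have hrepr : ((Wbasis F).repr) w = ∑ s ∈ T, ((Wbasis F).repr) (z s) := by
    rw [← hsum, map_sum]
  have hzero : ((Wbasis F).repr) (z s₀) = 0 := by
    ext kl
    by_contra hklne
    have hklmem : kl ∈ (((Wbasis F).repr) (z s₀)).support := Finsupp.mem_support_iff.mpr hklne
    have hdiag := grade_support F (hz s₀ hs₀) (represents_repr F (z s₀)) kl hklmem
    have heval : (((Wbasis F).repr) w) kl = ∑ s ∈ T, (((Wbasis F).repr) (z s)) kl := by
      rw [hrepr, Finsupp.finset_sum_apply]
    have hw0 : (((Wbasis F).repr) w) kl = 0 := by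
      by_contra hw0
      have := grade_support F hw (represents_repr F w) kl (Finsupp.mem_support_iff.mpr hw0)
      rw [hdiag] at this
      exact hne this
    have hothers : ∀ s ∈ T, s ≠ s₀ → (((Wbasis F).repr) (z s)) kl = 0 := by
      intro s hs hss
      by_contra hne2
      have := grade_support F (hz s hs) (represents_repr F (z s)) kl
        (Finsupp.mem_support_iff.mpr hne2)
      rw [hdiag] at this
      exact hss (hginj s hs s₀ hs₀ this.symm)
    rw [Finset.sum_eq_single s₀ (fun s hs hss => hothers s hs hss) (fun h => absurd hs₀ h)]
      at heval
    rw [hw0] at heval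
    exact hklne heval.symm
  have := congrArg ((Wbasis F).repr).symm hzero
  rwa [LinearEquiv.symm_apply_apply, map_zero] at this

end Grading

section Theta

/-- The embedding of `F[t]` into the Weyl algebra via `t ↦ h`. -/
noncomputable def Theta : Polynomial F →ₐ[F] WeylAlgebra F := Polynomial.aeval (Wh F)

lemma p_h : Wp F * Wh F = (Wh F + 1) * Wp F := by
  rw [add_mul, one_mul, h_p]
  abel

lemma q_h : Wq F * Wh F = (Wh F - 1) * Wq F := by
  rw [sub_mul, one_mul, h_q]
  abel

lemma Theta_X : Theta F (X : Polynomial F) = Wh F := Polynomial.aeval_X _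

lemma Theta_X_add_one : Theta F ((X : Polynomial F) + 1) = Wh F + 1 := by
  rw [map_add, map_one, Theta_X]

lemma Theta_X_sub_one : Theta F ((X : Polynomial F) - 1) = Wh F - 1 := by
  rw [map_sub, map_one, Theta_X]

lemma p_Theta (u : Polynomial F) :
    Wp F * Theta F u = Theta F (u.comp (X + 1)) * Wp F := by
  induction u using Polynomial.induction_on with
  | C a =>
    rw [Polynomial.C_comp, Theta, Polynomial.aeval_C, ← Algebra.commutes]
  | add u v hu hv =>
    rw [map_add, mul_add, hu, hv, Polynomial.add_comp, map_add, add_mul]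
  | monomial n a ih =>
    rw [show (Polynomial.C a * X ^ (n+1) : Polynomial F) = (Polynomial.C a * X ^ n) * X from by
      ring, map_mul, ← mul_assoc, ih, Theta_X, mul_assoc, p_h, ← mul_assoc]
    simp only [Polynomial.mul_comp, Polynomial.X_comp, map_mul, Theta_X_add_one, mul_assoc]

lemma q_Theta (u : Polynomial F) :
    Wq F * Theta F u = Theta F (u.comp (X - 1)) * Wq F := by
  induction u using Polynomial.induction_on with
  | C a =>
    rw [Polynomial.C_comp, Theta, Polynomial.aeval_C, ← Algebra.commutes]
  | add u v hu hv =>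
    rw [map_add, mul_add, hu, hv, Polynomial.add_comp, map_add, add_mul]
  | monomial n a ih =>
    rw [show (Polynomial.C a * X ^ (n+1) : Polynomial F) = (Polynomial.C a * X ^ n) * X from by
      ring, map_mul, ← mul_assoc, ih, Theta_X, mul_assoc, q_h, ← mul_assoc]
    simp only [Polynomial.mul_comp, Polynomial.X_comp, map_mul, Theta_X_sub_one, mul_assoc]

lemma Theta_q (u : Polynomial F) :
    Theta F u * Wq F = Wq F * Theta F (u.comp (X + 1)) := by
  rw [q_Theta F (u.comp (X + 1)), Polynomial.comp_assoc]
  congr 2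
  rw [Polynomial.add_comp, Polynomial.X_comp, Polynomial.one_comp, sub_add_cancel,
    Polynomial.comp_X]

lemma Theta_q_pow (u : Polynomial F) (n : ℕ) :
    Theta F u * Wq F ^ n = Wq F ^ n * Theta F (u.comp (X + Polynomial.C (n : F))) := by
  induction n generalizing u with
  | zero => simp
  | succ n ih =>
    rw [pow_succ', ← mul_assoc, Theta_q, mul_assoc, ih, ← mul_assoc, ← pow_succ',
      Polynomial.comp_assoc]
    congr 3
    rw [Polynomial.add_comp, Polynomial.X_comp, Polynomial.one_comp]
    push_cast
    simp only [Polynomial.C_add, Polynomial.C_1]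
    ring

/-- `φ_n = (t-1)(t-2)⋯(t-n)`. -/
noncomputable def phiP (n : ℕ) : Polynomial F :=
  ∏ j ∈ Finset.range n, (X - Polynomial.C ((j : F) + 1))

/-- `ψ_n = t(t+1)⋯(t+n-1)`. -/
noncomputable def psiP (n : ℕ) : Polynomial F :=
  ∏ j ∈ Finset.range n, (X + Polynomial.C (j : F))

lemma qp_eq_Theta : Wq F * Wp F = Theta F (X - 1) := by
  rw [map_sub, map_one, Theta, Polynomial.aeval_X, qp_rel, Wh]

lemma q_pow_p_pow (n : ℕ) : Wq F ^ n * Wp F ^ n = Theta F (phiP F n) := by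
  induction n with
  | zero => simp [phiP]
  | succ n ih =>
    rw [pow_succ', pow_succ, mul_assoc, ← mul_assoc (Wq F ^ n), ih, ← mul_assoc, q_Theta,
      mul_assoc, qp_eq_Theta, ← map_mul]
    congr 1
    rw [phiP, phiP, Finset.prod_range_succ', Polynomial.prod_comp]
    congr 1
    · refine Finset.prod_congr rfl fun j _ => ?_
      rw [Polynomial.sub_comp, Polynomial.X_comp, Polynomial.C_comp]
      push_cast
      simp only [Polynomial.C_add, Polynomial.C_1]
      ring
    · push_cast
      simp only [Polynomial.C_add, Polynomial.C_1, Nat.cast_zero, Polynomial.C_0]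
      ring

lemma pq_eq_Theta : Wp F * Wq F = Theta F X := by
  rw [Theta, Polynomial.aeval_X, Wh]

lemma p_pow_q_pow (n : ℕ) : Wp F ^ n * Wq F ^ n = Theta F (psiP F n) := by
  induction n with
  | zero => simp [psiP]
  | succ n ih =>
    rw [pow_succ', pow_succ, mul_assoc, ← mul_assoc (Wp F ^ n), ih, ← mul_assoc, p_Theta,
      mul_assoc, pq_eq_Theta, ← map_mul]
    congr 1
    rw [psiP, psiP, Finset.prod_range_succ', Polynomial.prod_comp]
    congr 1
    · refine Finset.prod_congr rfl fun j _ => ?_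
      rw [Polynomial.add_comp, Polynomial.X_comp, Polynomial.C_comp]
      push_cast
      simp only [Polynomial.C_add, Polynomial.C_1]
      ring
    · push_cast
      simp

lemma psi_eq_phi_comp (n : ℕ) :
    psiP F n = (phiP F n).comp (X + Polynomial.C (n : F)) := by
  rw [phiP, Polynomial.prod_comp, psiP, ← Finset.prod_range_reflect]
  refine Finset.prod_congr rfl fun j hj => ?_
  have hj' : j < n := Finset.mem_range.mp hj
  rw [Polynomial.sub_comp, Polynomial.X_comp, Polynomial.C_comp]
  have : ((n - 1 - j : ℕ) : F) = (n : F) - (j : F) - 1 := by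
    have h1 : n - 1 - j = n - (j + 1) := by omega
    rw [h1, Nat.cast_sub (by omega)]
    push_cast
    ring
  rw [this]
  simp only [Polynomial.C_add, Polynomial.C_sub, Polynomial.C_1, Polynomial.C_neg]
  ring

lemma psi_monic (n : ℕ) : (psiP F n).Monic :=
  Polynomial.monic_prod_of_monic _ _ fun _ _ => Polynomial.monic_X_add_C _

lemma psi_natDegree (n : ℕ) : (psiP F n).natDegree = n := by
  rw [psiP, Polynomial.natDegree_prod _ _ (fun j _ => (Polynomial.monic_X_add_C _).ne_zero)]
  simp only [Polynomial.natDegree_X_add_C]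
  rw [Finset.sum_const, Finset.card_range, smul_eq_mul, mul_one]

lemma phi_monic (n : ℕ) : (phiP F n).Monic :=
  Polynomial.monic_prod_of_monic _ _ fun _ _ => Polynomial.monic_X_sub_C _

lemma phi_natDegree (n : ℕ) : (phiP F n).natDegree = n := by
  rw [phiP, Polynomial.natDegree_prod _ _ (fun j _ => (Polynomial.monic_X_sub_C _).ne_zero)]
  simp only [Polynomial.natDegree_X_sub_C]
  rw [Finset.sum_const, Finset.card_range, smul_eq_mul, mul_one]

lemma Phi_h_eigen (n : ℕ) : (Phi F (Wh F)) ((X : Polynomial F) ^ n) = ((n : F) + 1) • X ^ n := by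
  rw [Wh, map_mul, Phi_p, Phi_q, Module.End.mul_apply]
  rw [show (Mop F) ((X : Polynomial F) ^ n) = X ^ (n + 1) by
    rw [Mop, LinearMap.mulLeft_apply, ← pow_succ']]
  rw [show (Dop F) ((X : Polynomial F) ^ (n+1)) = Polynomial.derivative (X ^ (n+1) : Polynomial F)
    from rfl, Polynomial.derivative_X_pow]
  rw [Nat.add_sub_cancel, Polynomial.smul_eq_C_mul]
  push_cast
  ring

lemma Theta_injective : Function.Injective (Theta F) := by
  intro u v huv
  have h : ∀ w : Polynomial F, Theta F w = 0 → w = 0 := by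
    intro w hw
    have hphi : Phi F (Theta F w) = 0 := by rw [hw, map_zero]
    rw [Theta, ← Polynomial.aeval_algHom_apply] at hphi
    by_contra hwne
    apply hwne
    apply Polynomial.eq_zero_of_infinite_isRoot
    refine Set.infinite_of_injective_forall_mem
      (f := fun n : ℕ => ((n : F) + 1)) ?_ ?_
    · intro a b hab
      have : (a : F) = b := by
        have := sub_eq_zero.mpr hab
        rw [add_sub_add_right_eq_sub] at this
        exact sub_eq_zero.mp this
      exact_mod_cast this
    · intro n
      have heig : (Module.End.HasEigenvector (Phi F (Wh F)) ((n : F) + 1)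
          ((X : Polynomial F) ^ n)) := by
        constructor
        · rw [Module.End.mem_eigenspace_iff]
          exact Phi_h_eigen F n
        · exact pow_ne_zero n Polynomial.X_ne_zero
      have := Module.End.aeval_apply_of_hasEigenvector (p := w) heig
      rw [hphi, LinearMap.zero_apply] at this
      have hzero : Polynomial.eval ((n : F) + 1) w • ((X : Polynomial F) ^ n) = 0 := this.symm
      have := smul_eq_zero.mp hzero
      rcases this with h | h
      · exact h
      · exact absurd h (pow_ne_zero n Polynomial.X_ne_zero)
  have := h (u - v) (by rw [map_sub, huv, sub_self])
  exact sub_eq_zero.mp this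

end Theta

section Final

lemma degree_one_of_shift (G : Polynomial F) (n : ℕ) (hn : 1 ≤ n)
    (hG : G - G.comp (X + Polynomial.C (n : F)) = 1) : G.natDegree = 1 := by
  have hev : ∀ N : ℕ, G.eval ((N : F) * n) = G.eval 0 - N := by
    intro N
    induction N with
    | zero => simp
    | succ N ih =>
      have h1 := congrArg (Polynomial.eval ((N : F) * n)) hG
      rw [Polynomial.eval_sub, Polynomial.eval_comp, Polynomial.eval_one, Polynomial.eval_add,
        Polynomial.eval_X, Polynomial.eval_C, ih] at h1
      rw [show ((N:F) * n + n : F) = ((N:F) + 1) * n from by ring] at h1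
      push_cast
      linear_combination -h1
  have hHeq : G.comp (Polynomial.C (n : F) * X) = Polynomial.C (G.eval 0) - X := by
    have hroot : ∀ N : ℕ,
        (G.comp (Polynomial.C (n:F) * X) - (Polynomial.C (G.eval 0) - X)).IsRoot (N : F) := by
      intro N
      simp only [Polynomial.IsRoot, Polynomial.eval_sub, Polynomial.eval_comp,
        Polynomial.eval_mul, Polynomial.eval_C, Polynomial.eval_X]
      rw [show (n:F) * (N:F) = (N:F) * n from mul_comm _ _, hev N]
      ring
    have h0 := Polynomial.eq_zero_of_infinite_isRoot
      (G.comp (Polynomial.C (n:F) * X) - (Polynomial.C (G.eval 0) - X))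
      (Set.infinite_of_injective_forall_mem (f := fun N : ℕ => (N : F))
        (fun a b hab => by simpa using Nat.cast_injective (R := F) hab) hroot)
    exact sub_eq_zero.mp h0
  have hdeg := congrArg Polynomial.natDegree hHeq
  have hn0 : (n : F) ≠ 0 := Nat.cast_ne_zero.mpr (by omega)
  rw [Polynomial.natDegree_comp, Polynomial.natDegree_C_mul hn0, Polynomial.natDegree_X,
    show Polynomial.C (G.eval 0) - X = -(X - Polynomial.C (G.eval 0)) from by ring,
    Polynomial.natDegree_neg, Polynomial.natDegree_X_sub_C] at hdeg
  omega

lemma mono_diag_pos (k n : ℕ) : Wmono F k (k + n) = Theta F (psiP F k) * Wq F ^ n := by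
  rw [Wmono, pow_add, ← mul_assoc, p_pow_q_pow]

lemma mono_diag_neg (l n : ℕ) : Wmono F (l + n) l = Wp F ^ n * Theta F (psiP F l) := by
  rw [Wmono, show l + n = n + l from add_comm l n, pow_add, mul_assoc, p_pow_q_pow]

end Final

end WeylAux

open WeylAux Polynomial

/-- Lemma 3.5. -/
theorem unsolvable_of_grade_pos (i : ℤ) (hi : 0 < i)
    (x : WeylAlgebra F) (hx : x ∈ Wgrade F i)
    (α : (ℕ × ℕ) →₀ F) (hrep : Represents F α x)
    (ρ σ : ℕ) (hρ : 0 < ρ) (hσ : 0 < σ) (hco : Nat.Coprime ρ σ)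
    (hv : ρ + σ ≤ vdeg F α ρ σ) :
    ¬ Solvable F x := by
  classical
  rintro ⟨y, hy⟩
  set n : ℕ := i.toNat with hn
  have hn1 : 1 ≤ n := by omega
  have hin : (n : ℤ) = i := Int.toNat_of_nonneg (le_of_lt hi)
  -- the support of α lies on the diagonal `l = k + n`
  have hαdiag : ∀ kl ∈ α.support, kl.2 = kl.1 + n := by
    intro kl hkl
    have h1 := grade_support F hx hrep kl hkl
    omega
  -- the `(ρ,σ)`-polynomial f with x = Θ(f) qⁿ
  set fP : Polynomial F := ∑ kl ∈ α.support, α kl • psiP F kl.1 with hfP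
  have hxeq : x = Theta F fP * Wq F ^ n := by
    calc x = ∑ kl ∈ α.support, α kl • Wmono F kl.1 kl.2 := hrep
    _ = ∑ kl ∈ α.support, α kl • (Theta F (psiP F kl.1) * Wq F ^ n) := by
        refine Finset.sum_congr rfl fun kl hkl => ?_
        rw [show kl.2 = kl.1 + n from hαdiag kl hkl, mono_diag_pos]
    _ = (∑ kl ∈ α.support, α kl • Theta F (psiP F kl.1)) * Wq F ^ n := by
        rw [Finset.sum_mul]
        exact Finset.sum_congr rfl fun kl _ => (smul_mul_assoc _ _ _).symm
    _ = Theta F fP * Wq F ^ n := by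
        rw [hfP, map_sum]
        simp only [map_smul]
  -- decompose y into graded components
  set β : (ℕ × ℕ) →₀ F := (Wbasis F).repr y with hβ
  set T : Finset ℤ := β.support.image (fun kl => (kl.2 : ℤ) - kl.1) with hT
  set ycomp : ℤ → WeylAlgebra F := fun s =>
    ∑ kl ∈ β.support.filter (fun kl => (kl.2 : ℤ) - kl.1 = s), β kl • Wmono F kl.1 kl.2
    with hycomp
  have hysum : ∑ s ∈ T, ycomp s = y := by
    simp only [hycomp, hT]
    rw [Finset.sum_fiberwise_of_maps_to (fun kl hkl => Finset.mem_image_of_mem _ hkl)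
      (fun kl => β kl • Wmono F kl.1 kl.2)]
    exact (represents_repr F y).symm
  have hycomp_grade : ∀ s : ℤ, ycomp s ∈ Wgrade F s := by
    intro s
    simp only [hycomp]
    refine grade_sum F _ _ fun kl hkl => ?_
    have hmem := (Finset.mem_filter.mp hkl).2
    have hm := mono_mem_grade F kl.1 kl.2
    rw [hmem] at hm
    exact grade_smul F hm
  have hcommgrade : ∀ s : ℤ, x * ycomp s - ycomp s * x ∈ Wgrade F (i + s) := by
    intro s
    refine grade_sub F (grade_mul F hx (hycomp_grade s)) ?_
    have := grade_mul F (hycomp_grade s) hx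
    rwa [add_comm] at this
  have hsumcomm : ∑ s ∈ T, (x * ycomp s - ycomp s * x) = 1 := by
    rw [Finset.sum_sub_distrib, ← Finset.mul_sum, ← Finset.sum_mul, hysum, hy]
  have hvanish : ∀ s ∈ T, s ≠ -i → x * ycomp s - ycomp s * x = 0 := by
    intro s hs hsne
    exact graded_piece_eq_zero F (g := fun s => i + s)
      (z := fun s => x * ycomp s - ycomp s * x)
      (fun s _ => hcommgrade s) (fun a _ b _ h => by have h' : i + a = i + b := h; omega) hsumcomm
      (one_mem_grade F) hs (by show i + s ≠ 0; omega)
  have hone : x * ycomp (-i) - ycomp (-i) * x = 1 := by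
    by_cases hmem : (-i) ∈ T
    · rw [← hsumcomm, Finset.sum_eq_single (-i) (fun s hs hne => hvanish s hs hne)
        (fun h => absurd hmem h)]
    · exfalso
      apply WA_one_ne_zero F
      rw [← hsumcomm]
      exact Finset.sum_eq_zero fun s hs => hvanish s hs (fun e => hmem (e ▸ hs))
  -- the polynomial g with ycomp (-i) = pⁿ Θ(g)
  have hy'diag : ∀ kl ∈ β.support.filter (fun kl => (kl.2 : ℤ) - kl.1 = -i),
      kl.1 = kl.2 + n := by
    intro kl hkl
    have h2 := (Finset.mem_filter.mp hkl).2
    omega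
  set gP : Polynomial F :=
    ∑ kl ∈ β.support.filter (fun kl => (kl.2 : ℤ) - kl.1 = -i), β kl • psiP F kl.2 with hgP
  have hy'eq : ycomp (-i) = Wp F ^ n * Theta F gP := by
    simp only [hycomp]
    calc ∑ kl ∈ β.support.filter (fun kl => (kl.2 : ℤ) - kl.1 = -i),
          β kl • Wmono F kl.1 kl.2
        = ∑ kl ∈ β.support.filter (fun kl => (kl.2 : ℤ) - kl.1 = -i),
          β kl • (Wp F ^ n * Theta F (psiP F kl.2)) := by
          refine Finset.sum_congr rfl fun kl hkl => ?_
          rw [show kl.1 = kl.2 + n from hy'diag kl hkl, mono_diag_neg]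
    _ = Wp F ^ n * ∑ kl ∈ β.support.filter (fun kl => (kl.2 : ℤ) - kl.1 = -i),
          β kl • Theta F (psiP F kl.2) := by
          rw [Finset.mul_sum]
          exact Finset.sum_congr rfl fun kl _ => (mul_smul_comm _ _ _).symm
    _ = Wp F ^ n * Theta F gP := by
          rw [hgP, map_sum]
          simp only [map_smul]
  -- compute the commutator through Θ
  have hxy : x * ycomp (-i) = Theta F (fP * phiP F n * gP) := by
    rw [hxeq, hy'eq, mul_assoc (Theta F fP) (Wq F ^ n) _,
      ← mul_assoc (Wq F ^ n) (Wp F ^ n) _, q_pow_p_pow, ← map_mul, ← map_mul]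
    congr 1
    ring
  have hyx : ycomp (-i) * x = Theta F (psiP F n * ((gP * fP).comp (X + Polynomial.C (n : F)))) := by
    rw [hy'eq, hxeq, mul_assoc (Wp F ^ n) (Theta F gP) _,
      ← mul_assoc (Theta F gP) (Theta F fP) _, ← map_mul, Theta_q_pow, ← mul_assoc,
      p_pow_q_pow, ← map_mul]
  have hid : Theta F (fP * phiP F n * gP
      - psiP F n * ((gP * fP).comp (X + Polynomial.C (n : F)))) = 1 := by
    rw [map_sub, ← hxy, ← hyx, hone]
  have hpoly : fP * phiP F n * gP
      - psiP F n * ((gP * fP).comp (X + Polynomial.C (n : F))) = 1 :=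
    Theta_injective F (hid.trans (map_one (Theta F)).symm)
  -- the shift identity for G = f·g·φₙ
  have hcomp : (fP * gP * phiP F n).comp (X + Polynomial.C (n : F))
      = psiP F n * ((gP * fP).comp (X + Polynomial.C (n : F))) := by
    simp only [Polynomial.mul_comp]
    rw [psi_eq_phi_comp]
    ring
  have hG : fP * gP * phiP F n - (fP * gP * phiP F n).comp (X + Polynomial.C (n : F)) = 1 := by
    rw [hcomp]
    linear_combination hpoly
  have hdeg1 := degree_one_of_shift F _ n hn1 hG
  have hGne : fP * gP * phiP F n ≠ 0 := by
    intro h0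
    rw [h0, Polynomial.zero_comp, sub_zero] at hG
    exact one_ne_zero hG.symm
  have hfne : fP ≠ 0 := fun h => hGne (by rw [h, zero_mul, zero_mul])
  have hgne : gP ≠ 0 := fun h => hGne (by rw [h, mul_zero, zero_mul])
  rw [Polynomial.natDegree_mul (mul_ne_zero hfne hgne) (phi_monic F n).ne_zero,
    Polynomial.natDegree_mul hfne hgne, phi_natDegree] at hdeg1
  have hnone : n = 1 := by omega
  have hfdeg : fP.natDegree = 0 := by omega
  have hfC : fP = Polynomial.C (fP.coeff 0) := Polynomial.eq_C_of_natDegree_eq_zero hfdeg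
  -- hence x is a scalar multiple of q
  have hxm : x = (fP.coeff 0) • Wmono F 0 1 := by
    rw [hxeq, hnone, pow_one, hfC]
    rw [show Theta F (Polynomial.C (fP.coeff 0)) = algebraMap F (WeylAlgebra F) (fP.coeff 0)
      from Polynomial.aeval_C _ _]
    rw [← Algebra.smul_def, Wmono, pow_zero, one_mul, pow_one, Polynomial.coeff_C_zero]
  have hrep2 : Represents F (Finsupp.single ((0 : ℕ), (1 : ℕ)) (fP.coeff 0)) x := by
    rw [Represents, Finsupp.sum_single_index]
    · exact hxm
    · rw [zero_smul]
  have hαeq := represents_unique F hrep hrep2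
  have hle : vdeg F α ρ σ ≤ σ := by
    rw [vdeg, hαeq]
    apply Finset.sup_le
    intro ij hij
    have hij2 := Finsupp.support_single_subset hij
    rw [Finset.mem_singleton] at hij2
    rw [hij2]
    simp
  omega
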